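/- For all positive integers a, the central binomial coefficient satisfies (4^a / sqrt(pi*a)) * exp(-1/(8a)) < C(2a, a) < 4^a / sqrt(pi*a). -/

import Mathlib

set_option maxHeartbeats 1600000

open Real Filter

noncomputable def rseq (a : ℕ) : ℝ :=
  (Nat.choose (2 * a) a : ℝ) * Real.sqrt (Real.pi * a) / 4 ^ a

lemma choose_succ_rel (a : ℕ) :
    ((a : ℝ) + 1) * (Nat.choose (2 * (a + 1)) (a + 1)) =
      2 * (2 * a + 1) * (Nat.choose (2 * a) a) := by
  have h2 : ((a + 1) * (a + 1).centralBinom : ℕ) = (2 * (2 * a + 1) * a.centralBinom : ℕ) :=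
    Nat.succ_mul_centralBinom_succ a
  have h3 := congrArg (fun n : ℕ => (n : ℝ)) h2
  simp only [Nat.centralBinom] at h3
  push_cast at h3
  linarith

lemma choose_pos (a : ℕ) : (0 : ℝ) < (Nat.choose (2 * a) a : ℝ) := by
  exact_mod_cast Nat.centralBinom_pos a

lemma rseq_lt_succ {a : ℕ} (ha : 0 < a) : rseq a < rseq (a + 1) := by
  have haR : (0 : ℝ) < a := by exact_mod_cast ha
  have hC := choose_pos a
  have hrel := choose_succ_rel a
  set x := Real.sqrt (Real.pi * a) with hx
  set y := Real.sqrt (Real.pi * (a + 1 : ℕ)) with hy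
  have hx2 : x ^ 2 = Real.pi * a := Real.sq_sqrt (by positivity)
  have hy2 : y ^ 2 = Real.pi * ((a : ℝ) + 1) := by
    rw [hy]; push_cast; exact Real.sq_sqrt (by positivity)
  have hxpos : 0 < x := Real.sqrt_pos.2 (by positivity)
  have hypos : 0 < y := by
    rw [hy]; exact Real.sqrt_pos.2 (by positivity)
  have key : 2 * ((a : ℝ) + 1) * x < (2 * a + 1) * y := by
    have hsq : (2 * ((a : ℝ) + 1) * x) ^ 2 < ((2 * a + 1) * y) ^ 2 := by
      have e1 : (2 * ((a : ℝ) + 1) * x) ^ 2 = 4 * ((a : ℝ) + 1) ^ 2 * (Real.pi * a) := by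
        rw [mul_pow, hx2]; ring
      have e2 : ((2 * (a : ℝ) + 1) * y) ^ 2 =
          (2 * (a : ℝ) + 1) ^ 2 * (Real.pi * ((a : ℝ) + 1)) := by
        rw [mul_pow, hy2]
      rw [e1, e2]
      nlinarith [Real.pi_pos, mul_pos Real.pi_pos haR]
    exact lt_of_pow_lt_pow_left₀ 2 (by positivity) hsq
  unfold rseq
  rw [div_lt_div_iff₀ (by positivity) (by positivity)]
  have h4pos : (0 : ℝ) < 4 ^ a := by positivity
  set C := (Nat.choose (2 * a) a : ℝ)
  set C' := (Nat.choose (2 * (a + 1)) (a + 1) : ℝ)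
  have k1 : 2 * ((a : ℝ) + 1) * x * (C * 4 ^ a) < (2 * (a : ℝ) + 1) * y * (C * 4 ^ a) :=
    mul_lt_mul_of_pos_right key (by positivity)
  have hrel2 : ((a : ℝ) + 1) * C' * (y * 4 ^ a) = 2 * (2 * (a : ℝ) + 1) * C * (y * 4 ^ a) := by
    rw [hrel]
  refine lt_of_mul_lt_mul_left ?_ (le_of_lt (by positivity : (0 : ℝ) < (a : ℝ) + 1))
  have h4s : ((4 : ℝ) ^ (a + 1)) = 4 ^ a * 4 := by ring
  rw [h4s]
  nlinarith [k1, hrel2]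

noncomputable def sseq (a : ℕ) : ℝ := rseq a * Real.exp (1 / (8 * a))

lemma sseq_succ_lt {a : ℕ} (ha : 0 < a) : sseq (a + 1) < sseq a := by
  have haR : (0 : ℝ) < a := by exact_mod_cast ha
  have hC := choose_pos a
  have hrel := choose_succ_rel a
  set x := Real.sqrt (Real.pi * a) with hx
  set y := Real.sqrt (Real.pi * (a + 1 : ℕ)) with hy
  have hx2 : x ^ 2 = Real.pi * a := Real.sq_sqrt (by positivity)
  have hy2 : y ^ 2 = Real.pi * ((a : ℝ) + 1) := by
    rw [hy]; push_cast; exact Real.sq_sqrt (by positivity)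
  have hxpos : 0 < x := Real.sqrt_pos.2 (by positivity)
  have hypos : 0 < y := by
    rw [hy]; exact Real.sqrt_pos.2 (by positivity)
  set E := Real.exp (1 / (8 * (a : ℝ))) with hE
  set E' := Real.exp (1 / (8 * ((a : ℝ) + 1))) with hE'
  have hEpos : 0 < E := Real.exp_pos _
  have hE'pos : 0 < E' := Real.exp_pos _
  have hE2 : E ^ 2 = Real.exp (1 / (4 * (a : ℝ))) := by
    rw [hE, ← Real.exp_nat_mul]
    congr 1
    field_simp
    ring
  have hE'2 : E' ^ 2 = Real.exp (1 / (4 * ((a : ℝ) + 1))) := by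
    rw [hE', ← Real.exp_nat_mul]
    congr 1
    field_simp
    ring
  have hsplit : Real.exp (1 / (4 * (a : ℝ))) =
      Real.exp (1 / (4 * ((a : ℝ) + 1))) * Real.exp (1 / (4 * a * (a + 1))) := by
    rw [← Real.exp_add]
    congr 1
    field_simp
  have hw : 1 / (4 * (a : ℝ) * (a + 1)) + 1 < Real.exp (1 / (4 * a * (a + 1))) :=
    Real.add_one_lt_exp (by positivity)
  have key : (2 * (a : ℝ) + 1) * y * E' < 2 * ((a : ℝ) + 1) * x * E := by
    have hsq : ((2 * (a : ℝ) + 1) * y * E') ^ 2 < (2 * ((a : ℝ) + 1) * x * E) ^ 2 := by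
      have e1 : ((2 * (a : ℝ) + 1) * y * E') ^ 2 =
          (2 * (a : ℝ) + 1) ^ 2 * (Real.pi * ((a : ℝ) + 1)) * E' ^ 2 := by
        rw [mul_pow, mul_pow, hy2]
      have e2 : (2 * ((a : ℝ) + 1) * x * E) ^ 2 =
          4 * ((a : ℝ) + 1) ^ 2 * (Real.pi * a) * E ^ 2 := by
        rw [mul_pow, mul_pow, hx2]; ring
      rw [e1, e2, hE2, hE'2, hsplit]
      set v := Real.exp (1 / (4 * ((a : ℝ) + 1))) with hv
      have hvpos : 0 < v := Real.exp_pos _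
      have hpi := Real.pi_pos
      have ht : (0 : ℝ) < 4 * a * ((a : ℝ) + 1) := by positivity
      have hw2 : 1 + 4 * (a : ℝ) * ((a : ℝ) + 1) <
          Real.exp (1 / (4 * a * (a + 1))) * (4 * a * ((a : ℝ) + 1)) := by
        rw [← div_lt_iff₀ ht, add_div, div_self ht.ne']
        linarith [hw]
      have hq : (0 : ℝ) < Real.pi * ((a : ℝ) + 1) * v := by positivity
      have hw3 := mul_lt_mul_of_pos_right hw2 hq
      nlinarith [hw3]
    exact lt_of_pow_lt_pow_left₀ 2 (by positivity) hsq
  unfold sseq rseq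
  have hcast1 : (1 : ℝ) / (8 * ((a : ℕ) + 1 : ℕ)) = 1 / (8 * ((a : ℝ) + 1)) := by push_cast; ring
  rw [hcast1, ← hE, ← hE', ← hx, ← hy]
  rw [div_mul_eq_mul_div, div_mul_eq_mul_div, div_lt_div_iff₀ (by positivity) (by positivity)]
  have h4pos : (0 : ℝ) < 4 ^ a := by positivity
  set C := (Nat.choose (2 * a) a : ℝ)
  set C' := (Nat.choose (2 * (a + 1)) (a + 1) : ℝ)
  have k1 : (2 * (a : ℝ) + 1) * y * E' * (C * 4 ^ a) < 2 * ((a : ℝ) + 1) * x * E * (C * 4 ^ a) :=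
    mul_lt_mul_of_pos_right key (by positivity)
  have hrel2 : ((a : ℝ) + 1) * C' * (y * E' * 4 ^ a) =
      2 * (2 * (a : ℝ) + 1) * C * (y * E' * 4 ^ a) := by
    rw [hrel]
  refine lt_of_mul_lt_mul_left ?_ (le_of_lt (by positivity : (0 : ℝ) < (a : ℝ) + 1))
  have h4s : ((4 : ℝ) ^ (a + 1)) = 4 ^ a * 4 := by ring
  rw [h4s]
  nlinarith [k1, hrel2]

lemma rseq_eq {a : ℕ} (ha : 0 < a) :
    rseq a = Real.sqrt Real.pi * Stirling.stirlingSeq (2 * a) / (Stirling.stirlingSeq a) ^ 2 := by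
  have haR : (0 : ℝ) < a := by exact_mod_cast ha
  have he : (0 : ℝ) < Real.exp 1 := Real.exp_pos 1
  have hfac : ((2 * a).factorial : ℝ) =
      (Nat.choose (2 * a) a : ℝ) * (Nat.factorial a : ℝ) * (Nat.factorial a : ℝ) := by
    have h := Nat.choose_mul_factorial_mul_factorial (show a ≤ 2 * a by omega)
    rw [show 2 * a - a = a by omega] at h
    exact_mod_cast h.symm
  have hfa : (0 : ℝ) < (Nat.factorial a : ℝ) := by exact_mod_cast a.factorial_pos
  set p := ((a : ℝ) / Real.exp 1) ^ a with hp
  have hppos : 0 < p := by positivity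
  have hs2a : Real.sqrt (2 * ((2 * a : ℕ) : ℝ)) = 2 * Real.sqrt a := by
    push_cast
    rw [show (2 : ℝ) * (2 * a) = 2 ^ 2 * a by ring, Real.sqrt_mul (by positivity),
      Real.sqrt_sq (by norm_num)]
  have hpow : (((2 * a : ℕ) : ℝ) / Real.exp 1) ^ (2 * a) = 4 ^ a * p ^ 2 := by
    push_cast
    rw [show (2 * (a : ℝ)) / Real.exp 1 = 2 * ((a : ℝ) / Real.exp 1) by ring, mul_pow, hp,
      ← pow_mul, pow_mul 2 2 a, mul_comm 2 a, pow_mul]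
    norm_num
  have hsa : Real.sqrt (Real.pi * a) = Real.sqrt Real.pi * Real.sqrt a :=
    Real.sqrt_mul Real.pi_pos.le _
  have hs1 : Stirling.stirlingSeq a = (Nat.factorial a : ℝ) / (Real.sqrt (2 * a) * p) := rfl
  have hs2 : Stirling.stirlingSeq (2 * a) =
      ((Nat.choose (2 * a) a : ℝ) * (Nat.factorial a : ℝ) * (Nat.factorial a : ℝ)) /
        (2 * Real.sqrt a * (4 ^ a * p ^ 2)) := by
    unfold Stirling.stirlingSeq
    rw [hfac, hs2a, hpow]
  have hsq2a : Real.sqrt (2 * (a : ℝ)) ^ 2 = 2 * a := Real.sq_sqrt (by positivity)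
  have hsqa : Real.sqrt (a : ℝ) * Real.sqrt a = a := Real.mul_self_sqrt haR.le
  have hsapos : (0 : ℝ) < Real.sqrt a := Real.sqrt_pos.2 haR
  have hs2apos : (0 : ℝ) < Real.sqrt (2 * (a : ℝ)) := Real.sqrt_pos.2 (by positivity)
  unfold rseq
  rw [hs1, hs2, hsa, div_pow, mul_pow, hsq2a]
  field_simp
  ring_nf
  rw [Real.sq_sqrt haR.le]

lemma tendsto_rseq : Tendsto rseq atTop (nhds 1) := by
  have hst := Stirling.tendsto_stirlingSeq_sqrt_pi
  have h2 : Tendsto (fun a : ℕ => Stirling.stirlingSeq (2 * a)) atTop (nhds (Real.sqrt Real.pi)) :=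
    hst.comp (tendsto_atTop_atTop_of_monotone (fun x y h => by omega) (fun b => ⟨b, by omega⟩))
  have hpi : Real.sqrt Real.pi ≠ 0 := ne_of_gt (Real.sqrt_pos.2 Real.pi_pos)
  have hlim : Tendsto (fun a : ℕ =>
      Real.sqrt Real.pi * Stirling.stirlingSeq (2 * a) / (Stirling.stirlingSeq a) ^ 2) atTop
      (nhds 1) := by
    have h3 := (tendsto_const_nhds (x := Real.sqrt Real.pi) (f := atTop (α := ℕ))).mul h2
    have h4 := h3.div (hst.pow 2) (pow_ne_zero 2 hpi)
    convert h4 using 2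
    · rfl
    · field_simp
  refine hlim.congr' ?_
  filter_upwards [eventually_ge_atTop 1] with n hn
  exact (rseq_eq hn).symm

lemma tendsto_sseq : Tendsto sseq atTop (nhds 1) := by
  have h1 : Tendsto (fun a : ℕ => (1 : ℝ) / (8 * a)) atTop (nhds 0) := by
    apply Tendsto.div_atTop tendsto_const_nhds
    exact Tendsto.const_mul_atTop (by norm_num) tendsto_natCast_atTop_atTop
  have h2 : Tendsto (fun a : ℕ => Real.exp (1 / (8 * a))) atTop (nhds 1) := by
    have h3 := (Real.continuous_exp.tendsto 0).comp h1
    simpa [Function.comp_def] using h3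
  unfold sseq
  have h4 := tendsto_rseq.mul h2
  rw [mul_one] at h4
  exact h4

lemma rseq_lt_one {a : ℕ} (ha : 0 < a) : rseq a < 1 := by
  have h1 : rseq (a + 1) ≤ 1 := by
    refine ge_of_tendsto tendsto_rseq ?_
    filter_upwards [eventually_ge_atTop (a + 1)] with n hn
    clear ha
    induction n with
    | zero => omega
    | succ m ih =>
      rcases Nat.lt_or_ge (a + 1) (m + 1) with h | h
      · exact le_trans (ih (by omega)) (rseq_lt_succ (by omega : 0 < m)).le
      · have hh : a + 1 = m + 1 := by omega
        rw [hh]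
  exact lt_of_lt_of_le (rseq_lt_succ ha) h1

lemma one_lt_sseq {a : ℕ} (ha : 0 < a) : 1 < sseq a := by
  have h1 : 1 ≤ sseq (a + 1) := by
    refine le_of_tendsto tendsto_sseq ?_
    filter_upwards [eventually_ge_atTop (a + 1)] with n hn
    clear ha
    induction n with
    | zero => omega
    | succ m ih =>
      rcases Nat.lt_or_ge (a + 1) (m + 1) with h | h
      · exact le_trans (sseq_succ_lt (by omega : 0 < m)).le (ih (by omega))
      · have hh : a + 1 = m + 1 := by omega
        rw [hh]
  exact lt_of_le_of_lt h1 (sseq_succ_lt ha)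

/-- Stirling-type bounds on the central binomial coefficient:
for all integers `a ≥ 1`,
`(4^a / √(π a)) e^{-1/(8a)} < C(2a, a) < 4^a / √(π a)`. -/
theorem central_binom_bounds (a : ℕ) (ha : 0 < a) :
    ((4 : ℝ) ^ a / Real.sqrt (Real.pi * a)) * Real.exp (-1 / (8 * a)) <
        (Nat.choose (2 * a) a : ℝ) ∧
      (Nat.choose (2 * a) a : ℝ) < (4 : ℝ) ^ a / Real.sqrt (Real.pi * a) := by
  have haR : (0 : ℝ) < a := by exact_mod_cast ha
  have hspos : 0 < Real.sqrt (Real.pi * a) := Real.sqrt_pos.2 (by positivity)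
  have h4pos : (0 : ℝ) < 4 ^ a := by positivity
  have hC := choose_pos a
  constructor
  · have hs := one_lt_sseq ha
    unfold sseq rseq at hs
    set E := Real.exp (1 / (8 * (a : ℝ))) with hE
    have hEpos : 0 < E := Real.exp_pos _
    have h5 : (4 : ℝ) ^ a < (Nat.choose (2 * a) a : ℝ) * Real.sqrt (Real.pi * a) * E := by
      rw [div_mul_eq_mul_div, lt_div_iff₀ h4pos, one_mul] at hs
      linarith
    rw [show (-1 : ℝ) / (8 * a) = -(1 / (8 * (a : ℝ))) by ring, Real.exp_neg, ← hE,
      ← div_eq_mul_inv, div_lt_iff₀ hEpos]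
    rw [div_lt_iff₀ hspos]
    nlinarith [h5]
  · have hr := rseq_lt_one ha
    unfold rseq at hr
    rw [div_lt_iff₀ h4pos, one_mul] at hr
    rw [lt_div_iff₀ hspos]
    linarith
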